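/- The monomials T1^j T2^k I^l for j,k,l = 0,1,2,... form a basis of the complex vector space U_q(iso_2) (Poincaré–Birkhoff–Witt theorem for U_q(iso_2)). -/

import Mathlib

/-- The defining relations of U_q(iso₂) on the free algebra on three generators
(0 ↦ I, 1 ↦ T1, 2 ↦ T2), with sq playing the role of q^{1/2}. -/
inductive IsoRel (sq : ℂ) : FreeAlgebra ℂ (Fin 3) → FreeAlgebra ℂ (Fin 3) → Prop
  | rel1 : IsoRel sq
      (sq • (FreeAlgebra.ι ℂ (0 : Fin 3) * FreeAlgebra.ι ℂ (2 : Fin 3)) -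
        sq⁻¹ • (FreeAlgebra.ι ℂ (2 : Fin 3) * FreeAlgebra.ι ℂ (0 : Fin 3)))
      (FreeAlgebra.ι ℂ (1 : Fin 3))
  | rel2 : IsoRel sq
      (sq • (FreeAlgebra.ι ℂ (1 : Fin 3) * FreeAlgebra.ι ℂ (0 : Fin 3)) -
        sq⁻¹ • (FreeAlgebra.ι ℂ (0 : Fin 3) * FreeAlgebra.ι ℂ (1 : Fin 3)))
      (FreeAlgebra.ι ℂ (2 : Fin 3))
  | rel3 : IsoRel sq
      (sq • (FreeAlgebra.ι ℂ (2 : Fin 3) * FreeAlgebra.ι ℂ (1 : Fin 3)) -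
        sq⁻¹ • (FreeAlgebra.ι ℂ (1 : Fin 3) * FreeAlgebra.ι ℂ (2 : Fin 3)))
      0

/-- The algebra U_q(iso₂). -/
noncomputable abbrev UqIso2 (sq : ℂ) := RingQuot (IsoRel sq)

/-- The generators I, T1, T2 of U_q(iso₂). -/
noncomputable def gen (sq : ℂ) (i : Fin 3) : UqIso2 sq :=
  RingQuot.mkAlgHom ℂ (IsoRel sq) (FreeAlgebra.ι ℂ i)


namespace Stmt5Aux

open Finsupp

noncomputable section

abbrev V : Type := (ℕ × ℕ × ℕ) →₀ ℂ

variable (q sq : ℂ)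

def cc : ℕ → ℂ
  | 0 => 0
  | j+1 => sq * q ^ j + q⁻¹ * cc j

def dd : ℕ → ℂ
  | 0 => 0
  | k+1 => sq⁻¹ * (q⁻¹) ^ k + q * dd k

def opA : V →ₗ[ℂ] V :=
  Finsupp.lift V ℂ _ (fun x => Finsupp.single (x.1 + 1, x.2.1, x.2.2) 1)

def opB : V →ₗ[ℂ] V :=
  Finsupp.lift V ℂ _ (fun x => Finsupp.single (x.1, x.2.1 + 1, x.2.2) ((q⁻¹) ^ x.1))

def opC : V →ₗ[ℂ] V :=
  Finsupp.lift V ℂ _ (fun x =>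
    Finsupp.single (x.1, x.2.1, x.2.2 + 1) (q ^ x.1 * (q⁻¹) ^ x.2.1)
    + Finsupp.single (x.1 + 1, x.2.1 - 1, x.2.2) (q ^ (x.1 + 1) * (q⁻¹) ^ x.2.1 * dd q sq x.2.1)
    + Finsupp.single (x.1 - 1, x.2.1 + 1, x.2.2) (-(cc q sq x.1)))

theorem opA_single (j k l : ℕ) (r : ℂ) :
    opA (Finsupp.single (j, k, l) r) = Finsupp.single (j + 1, k, l) r := by
  simp only [opA, Finsupp.lift_apply]
  rw [Finsupp.sum_single_index] <;> simp [Finsupp.smul_single']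

theorem opB_single (j k l : ℕ) (r : ℂ) :
    opB q (Finsupp.single (j, k, l) r) = Finsupp.single (j, k + 1, l) (r * (q⁻¹) ^ j) := by
  simp only [opB, Finsupp.lift_apply]
  rw [Finsupp.sum_single_index] <;> simp only [zero_smul, Finsupp.smul_single']

theorem opC_single (j k l : ℕ) (r : ℂ) :
    opC q sq (Finsupp.single (j, k, l) r) =
      Finsupp.single (j, k, l + 1) (r * (q ^ j * (q⁻¹) ^ k))
      + Finsupp.single (j + 1, k - 1, l) (r * (q ^ (j + 1) * (q⁻¹) ^ k * dd q sq k))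
      + Finsupp.single (j - 1, k + 1, l) (-(r * cc q sq j)) := by
  simp only [opC, Finsupp.lift_apply]
  rw [Finsupp.sum_single_index] <;>
    simp only [zero_smul, smul_add, Finsupp.smul_single', mul_neg, Finsupp.single_zero,
      smul_zero, add_zero, zero_add]

section Scal
variable {q sq : ℂ}

theorem hsq0 (hq : q ≠ 0) (hsq : sq ^ 2 = q) : sq ≠ 0 := by
  intro h; apply hq; rw [← hsq, h]; ring

theorem hmul (hsq : sq ^ 2 = q) : sq * sq = q := by rw [← hsq]; ring

theorem hkey (hq : q ≠ 0) (hsq : sq ^ 2 = q) : sq * q⁻¹ = sq⁻¹ := by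
  have h0 := hsq0 hq hsq
  field_simp [← hsq]; linear_combination hsq

theorem hv2 (hq : q ≠ 0) (hsq : sq ^ 2 = q) : sq⁻¹ * sq⁻¹ = q⁻¹ := by
  rw [← mul_inv, hmul hsq]

theorem cc_key (hq : q ≠ 0) (hsq : sq ^ 2 = q) (j : ℕ) :
    cc q sq j * (sq - sq⁻¹ * q⁻¹) = q ^ j - (q⁻¹) ^ j := by
  have h0 := hsq0 hq hsq
  have hs : sq * sq⁻¹ = 1 := mul_inv_cancel₀ h0
  have hqq : q * q⁻¹ = 1 := mul_inv_cancel₀ hq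
  induction j with
  | zero => simp [cc]
  | succ n ih =>
      rw [cc]
      linear_combination q⁻¹ * ih + q ^ n * hmul hsq - q⁻¹ * q ^ n * hs

theorem dd_key (hq : q ≠ 0) (hsq : sq ^ 2 = q) (k : ℕ) :
    dd q sq k * (sq * q - sq⁻¹) = q ^ k - (q⁻¹) ^ k := by
  have h0 := hsq0 hq hsq
  have hs : sq * sq⁻¹ = 1 := mul_inv_cancel₀ h0
  induction k with
  | zero => simp [dd]
  | succ n ih =>
      rw [dd]
      linear_combination q * ih + q * (q⁻¹) ^ n * hs - (q⁻¹) ^ n * hv2 hq hsq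

theorem ccid (hq : q ≠ 0) (hsq : sq ^ 2 = q) (j : ℕ) :
    sq⁻¹ * cc q sq (j + 1) - sq * cc q sq j = (q⁻¹) ^ j := by
  have h0 := hsq0 hq hsq
  have hs : sq⁻¹ * sq = 1 := inv_mul_cancel₀ h0
  rw [cc]
  linear_combination q ^ j * hs - cc_key hq hsq j

theorem ddid (hq : q ≠ 0) (hsq : sq ^ 2 = q) (k : ℕ) :
    sq * dd q sq (k + 1) - sq⁻¹ * dd q sq k = q ^ k := by
  have h0 := hsq0 hq hsq
  have hs : sq * sq⁻¹ = 1 := mul_inv_cancel₀ h0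
  rw [dd]
  linear_combination (q⁻¹) ^ k * hs + dd_key hq hsq k

end Scal

section Rel
variable {q sq : ℂ}

theorem relBA (hq : q ≠ 0) (hsq : sq ^ 2 = q) :
    sq • ((opB q : Module.End ℂ V) * opA) - sq⁻¹ • ((opA : Module.End ℂ V) * opB q) = 0 := by
  apply Finsupp.lhom_ext
  rintro ⟨j, k, l⟩ r
  simp only [LinearMap.sub_apply, LinearMap.smul_apply, Module.End.mul_apply, LinearMap.zero_apply,
    opA_single, opB_single, Finsupp.smul_single']
  rw [sub_eq_zero]
  congr 1
  linear_combination r * (q⁻¹) ^ j * hkey hq hsq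

theorem relAC (hq : q ≠ 0) (hsq : sq ^ 2 = q) :
    sq • ((opA : Module.End ℂ V) * opC q sq) - sq⁻¹ • ((opC q sq : Module.End ℂ V) * opA) =
      opB q := by
  have h0 := hsq0 hq hsq
  have hs : sq * sq⁻¹ = 1 := mul_inv_cancel₀ h0
  have h3 : q * sq⁻¹ = sq := by rw [← hmul hsq]; field_simp
  apply Finsupp.lhom_ext
  rintro ⟨j, k, l⟩ r
  simp only [LinearMap.sub_apply, LinearMap.smul_apply, Module.End.mul_apply,
    opA_single, opB_single, opC_single, map_add, smul_add, Finsupp.smul_single',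
    Nat.add_sub_cancel, mul_neg]
  cases j with
  | zero =>
      simp only [cc, dd, Nat.zero_sub, Nat.sub_zero, mul_zero, neg_zero, Finsupp.single_zero,
        add_zero, zero_add, Nat.zero_add]
      ext ⟨a, b, c⟩
      simp only [Finsupp.add_apply, Finsupp.sub_apply, Finsupp.single_apply, Prod.mk.injEq]
      split_ifs <;> first
        | omega
        | ring1
        | linear_combination r * hs
        | linear_combination (-(r * (q⁻¹) ^ k)) * h3
        | linear_combination (-(r * q * (q⁻¹) ^ k * dd q sq k)) * h3
  | succ n =>
      have hcc := ccid hq hsq (n + 1)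
      simp only [Nat.succ_sub_one]
      ext ⟨a, b, c⟩
      simp only [Finsupp.add_apply, Finsupp.sub_apply, Finsupp.single_apply, Prod.mk.injEq]
      split_ifs <;> first
        | omega
        | ring1
        | linear_combination r * hs
        | linear_combination (-(r * q ^ (n + 2) * (q⁻¹) ^ k * dd q sq k)) * h3
        | linear_combination (-(r * q ^ (n + 1) * (q⁻¹) ^ k)) * h3
        | linear_combination r * hcc

theorem cc_zero : cc q sq 0 = 0 := rfl
theorem dd_zero : dd q sq 0 = 0 := rfl

theorem hqi (hq : q ≠ 0) (m : ℕ) : q ^ m * (q⁻¹) ^ m = 1 := by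
  rw [← mul_pow, mul_inv_cancel₀ hq, one_pow]

theorem relCB (hq : q ≠ 0) (hsq : sq ^ 2 = q) :
    sq • ((opC q sq : Module.End ℂ V) * opB q) - sq⁻¹ • ((opB q : Module.End ℂ V) * opC q sq) =
      opA := by
  have h0 := hsq0 hq hsq
  have hs : sq * sq⁻¹ = 1 := mul_inv_cancel₀ h0
  have hk := hkey hq hsq
  have hqq : q * q⁻¹ = 1 := mul_inv_cancel₀ hq
  have hdd1 : sq * dd q sq 1 = 1 := by
    have h := ddid hq hsq 0; rw [dd_zero] at h; simpa using h
  have hdd0 : dd q sq 0 = 0 := dd_zero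
  apply Finsupp.lhom_ext
  rintro ⟨j, k, l⟩ r
  simp only [LinearMap.sub_apply, LinearMap.smul_apply, Module.End.mul_apply,
    opA_single, opB_single, opC_single, map_add, smul_add, Finsupp.smul_single',
    Nat.add_sub_cancel, mul_neg]
  cases j with
  | zero =>
      cases k with
      | zero =>
          simp only [cc_zero, dd_zero, Nat.zero_sub, Nat.sub_zero, mul_zero, zero_mul, neg_zero,
            Finsupp.single_zero, add_zero, zero_add, Nat.zero_add, pow_zero, one_mul, mul_one]
          ext ⟨a, b, c⟩
          simp only [Finsupp.add_apply, Finsupp.sub_apply, Finsupp.single_apply, Prod.mk.injEq]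
          split_ifs <;> first
            | omega
            | ring1
            | linear_combination r * hk
            | linear_combination (r * q * q⁻¹ * sq⁻¹) * hdd0
            | linear_combination (r * q * q⁻¹) * hdd1 + r * hqi hq 1
      | succ m =>
          simp only [cc_zero, dd_zero, Nat.zero_sub, Nat.sub_zero, Nat.succ_sub_one, mul_zero,
            zero_mul, neg_zero, Finsupp.single_zero, add_zero, zero_add, Nat.zero_add, pow_zero,
            one_mul, mul_one]
          ext ⟨a, b, c⟩
          simp only [Finsupp.add_apply, Finsupp.sub_apply, Finsupp.single_apply, Prod.mk.injEq]
          split_ifs <;> first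
            | omega
            | ring1
            | linear_combination (r * (q⁻¹) ^ (m + 1)) * hk
            | linear_combination (r * q * (q⁻¹) ^ (m + 2)) * ddid hq hsq (m + 1) +
                r * hqi hq (m + 2)
  | succ n =>
      cases k with
      | zero =>
          simp only [cc_zero, dd_zero, Nat.zero_sub, Nat.sub_zero, Nat.succ_sub_one, mul_zero,
            zero_mul, neg_zero, Finsupp.single_zero, add_zero, zero_add, Nat.zero_add, pow_zero,
            one_mul, mul_one]
          ext ⟨a, b, c⟩
          simp only [Finsupp.add_apply, Finsupp.sub_apply, Finsupp.single_apply, Prod.mk.injEq]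
          split_ifs <;> first
            | omega
            | ring1
            | linear_combination (r * q ^ (n + 1) * (q⁻¹) ^ (n + 1)) * hk
            | linear_combination (-(r * (q⁻¹) ^ n * cc q sq (n + 1))) * hk
            | linear_combination (r * q ^ (n + 2) * (q⁻¹) ^ (n + 2) * sq⁻¹) * hdd0
            | linear_combination (r * q ^ (n + 2) * (q⁻¹) ^ (n + 2)) * hdd1 +
                r * hqi hq (n + 2)
      | succ m =>
          simp only [cc_zero, dd_zero, Nat.succ_sub_one, mul_zero, zero_mul, neg_zero,
            Finsupp.single_zero, add_zero, zero_add, pow_zero, one_mul, mul_one]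
          ext ⟨a, b, c⟩
          simp only [Finsupp.add_apply, Finsupp.sub_apply, Finsupp.single_apply, Prod.mk.injEq]
          split_ifs <;> first
            | omega
            | ring1
            | linear_combination (r * q ^ (n + 1) * (q⁻¹) ^ (n + m + 2)) * hk
            | linear_combination (-(r * (q⁻¹) ^ n * cc q sq (n + 1))) * hk
            | linear_combination (r * q ^ (n + 2) * (q⁻¹) ^ (n + m + 3)) * ddid hq hsq (m + 1) +
                r * hqi hq (n + m + 3)

end Rel

section Rep
variable (q sq : ℂ)

def f3 : Fin 3 → Module.End ℂ V := ![opC q sq, opA, opB q]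

theorem rep_rel (hq : q ≠ 0) (hsq : sq ^ 2 = q) ⦃x y : FreeAlgebra ℂ (Fin 3)⦄
    (h : IsoRel sq x y) :
    FreeAlgebra.lift ℂ (f3 q sq) x = FreeAlgebra.lift ℂ (f3 q sq) y := by
  induction h with
  | rel1 =>
      simp only [map_sub, map_smul, map_mul, FreeAlgebra.lift_ι_apply, f3,
        Matrix.cons_val_zero, Matrix.cons_val_one, Matrix.head_cons, Matrix.cons_val_two,
        Matrix.tail_cons]
      exact relCB hq hsq
  | rel2 =>
      simp only [map_sub, map_smul, map_mul, FreeAlgebra.lift_ι_apply, f3,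
        Matrix.cons_val_zero, Matrix.cons_val_one, Matrix.head_cons, Matrix.cons_val_two,
        Matrix.tail_cons]
      exact relAC hq hsq
  | rel3 =>
      simp only [map_sub, map_smul, map_mul, map_zero, FreeAlgebra.lift_ι_apply, f3,
        Matrix.cons_val_zero, Matrix.cons_val_one, Matrix.head_cons, Matrix.cons_val_two,
        Matrix.tail_cons]
      exact relBA hq hsq

def rep (hq : q ≠ 0) (hsq : sq ^ 2 = q) : UqIso2 sq →ₐ[ℂ] Module.End ℂ V :=
  RingQuot.liftAlgHom ℂ ⟨FreeAlgebra.lift ℂ (f3 q sq), rep_rel q sq hq hsq⟩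

theorem rep_gen (hq : q ≠ 0) (hsq : sq ^ 2 = q) (i : Fin 3) :
    rep q sq hq hsq (gen sq i) = f3 q sq i := by
  rw [gen, rep, RingQuot.liftAlgHom_mkAlgHom_apply, FreeAlgebra.lift_ι_apply]

theorem rep_apply (hq : q ≠ 0) (hsq : sq ^ 2 = q) (j k l : ℕ) :
    rep q sq hq hsq (gen sq 1 ^ j * gen sq 2 ^ k * gen sq 0 ^ l)
      (Finsupp.single ((0 : ℕ), (0 : ℕ), (0 : ℕ)) 1) = Finsupp.single (j, k, l) 1 := by
  have hC : ∀ m : ℕ, ((opC q sq) ^ m) (Finsupp.single ((0 : ℕ), (0 : ℕ), (0 : ℕ)) 1)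
      = Finsupp.single (0, 0, m) 1 := by
    intro m
    induction m with
    | zero => simp
    | succ n ih =>
        rw [pow_succ', Module.End.mul_apply, ih, opC_single]
        simp [cc_zero, dd_zero]
  have hB : ∀ k m : ℕ, ((opB q) ^ k) (Finsupp.single ((0 : ℕ), (0 : ℕ), m) 1)
      = Finsupp.single (0, k, m) 1 := by
    intro k m
    induction k with
    | zero => simp
    | succ n ih =>
        rw [pow_succ', Module.End.mul_apply, ih, opB_single]
        simp
  have hA : ∀ j k m : ℕ, (opA ^ j) (Finsupp.single ((0 : ℕ), k, m) 1)
      = Finsupp.single (j, k, m) 1 := by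
    intro j k m
    induction j with
    | zero => simp
    | succ n ih =>
        rw [pow_succ', Module.End.mul_apply, ih, opA_single]
  rw [map_mul, map_mul, map_pow, map_pow, map_pow, rep_gen, rep_gen, rep_gen]
  simp only [f3, Matrix.cons_val_zero, Matrix.cons_val_one, Matrix.head_cons,
    Matrix.cons_val_two, Matrix.tail_cons]
  rw [Module.End.mul_apply, Module.End.mul_apply, hC, hB, hA]

end Rep

section Span
variable {q sq : ℂ}

theorem gen_def (sq : ℂ) (i : Fin 3) :
    RingQuot.mkAlgHom ℂ (IsoRel sq) (FreeAlgebra.ι ℂ i) = gen sq i := rfl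

theorem quot_rel3 (hq : q ≠ 0) (hsq : sq ^ 2 = q) :
    gen sq 2 * gen sq 1 = q⁻¹ • (gen sq 1 * gen sq 2) := by
  have h0 := hsq0 hq hsq
  have e := RingQuot.mkAlgHom_rel ℂ (IsoRel.rel3 (sq := sq))
  simp only [map_sub, map_smul, map_mul, map_zero, gen_def] at e
  have e' : sq • (gen sq 2 * gen sq 1) = sq⁻¹ • (gen sq 1 * gen sq 2) := by
    rw [← sub_eq_zero]; exact e
  calc gen sq 2 * gen sq 1 = sq⁻¹ • (sq • (gen sq 2 * gen sq 1)) := by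
        rw [smul_smul, inv_mul_cancel₀ h0, one_smul]
    _ = sq⁻¹ • (sq⁻¹ • (gen sq 1 * gen sq 2)) := by rw [e']
    _ = q⁻¹ • (gen sq 1 * gen sq 2) := by rw [smul_smul, hv2 hq hsq]

theorem quot_rel2 (hq : q ≠ 0) (hsq : sq ^ 2 = q) :
    gen sq 0 * gen sq 1 = q • (gen sq 1 * gen sq 0) - sq • gen sq 2 := by
  have h0 := hsq0 hq hsq
  have e := RingQuot.mkAlgHom_rel ℂ (IsoRel.rel2 (sq := sq))
  simp only [map_sub, map_smul, map_mul, gen_def] at e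
  have e' : sq⁻¹ • (gen sq 0 * gen sq 1) = sq • (gen sq 1 * gen sq 0) - gen sq 2 := by
    rw [← e]; abel
  calc gen sq 0 * gen sq 1 = sq • (sq⁻¹ • (gen sq 0 * gen sq 1)) := by
        rw [smul_smul, mul_inv_cancel₀ h0, one_smul]
    _ = sq • (sq • (gen sq 1 * gen sq 0) - gen sq 2) := by rw [e']
    _ = q • (gen sq 1 * gen sq 0) - sq • gen sq 2 := by
        rw [smul_sub, smul_smul, hmul hsq]

theorem quot_rel1 (hq : q ≠ 0) (hsq : sq ^ 2 = q) :
    gen sq 0 * gen sq 2 = q⁻¹ • (gen sq 2 * gen sq 0) + sq⁻¹ • gen sq 1 := by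
  have h0 := hsq0 hq hsq
  have e := RingQuot.mkAlgHom_rel ℂ (IsoRel.rel1 (sq := sq))
  simp only [map_sub, map_smul, map_mul, gen_def] at e
  have e' : sq • (gen sq 0 * gen sq 2) = gen sq 1 + sq⁻¹ • (gen sq 2 * gen sq 0) := by
    rw [← e]; abel
  calc gen sq 0 * gen sq 2 = sq⁻¹ • (sq • (gen sq 0 * gen sq 2)) := by
        rw [smul_smul, inv_mul_cancel₀ h0, one_smul]
    _ = sq⁻¹ • (gen sq 1 + sq⁻¹ • (gen sq 2 * gen sq 0)) := by rw [e']
    _ = q⁻¹ • (gen sq 2 * gen sq 0) + sq⁻¹ • gen sq 1 := by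
        rw [smul_add, smul_smul, hv2 hq hsq, add_comm]

/-- The PBW monomials. -/
noncomputable def mono (sq : ℂ) : ℕ × ℕ × ℕ → UqIso2 sq := fun x =>
  gen sq 1 ^ x.1 * gen sq 2 ^ x.2.1 * gen sq 0 ^ x.2.2

theorem mono_mem (sq : ℂ) (x : ℕ × ℕ × ℕ) :
    mono sq x ∈ Submodule.span ℂ (Set.range (mono sq)) :=
  Submodule.subset_span (Set.mem_range_self x)

theorem mul_span_helper {sq : ℂ} (x : UqIso2 sq)
    (hx : ∀ p, x * mono sq p ∈ Submodule.span ℂ (Set.range (mono sq))) :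
    ∀ s ∈ Submodule.span ℂ (Set.range (mono sq)),
      x * s ∈ Submodule.span ℂ (Set.range (mono sq)) := by
  intro s hs
  induction hs using Submodule.span_induction with
  | mem y hy => obtain ⟨p, rfl⟩ := hy; exact hx p
  | zero => rw [mul_zero]; exact Submodule.zero_mem _
  | add y z _ _ hy hz => rw [mul_add]; exact Submodule.add_mem _ hy hz
  | smul a y _ hy => rw [mul_smul_comm]; exact Submodule.smul_mem _ a hy

theorem gen1_mul_mono (sq : ℂ) (p : ℕ × ℕ × ℕ) :
    gen sq 1 * mono sq p ∈ Submodule.span ℂ (Set.range (mono sq)) := by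
  obtain ⟨j, k, l⟩ := p
  have : gen sq 1 * mono sq (j, k, l) = mono sq (j + 1, k, l) := by
    simp only [mono]
    rw [← mul_assoc, ← mul_assoc, ← pow_succ']
  rw [this]; exact mono_mem sq _

theorem gen2_mul_mono (hq : q ≠ 0) (hsq : sq ^ 2 = q) (p : ℕ × ℕ × ℕ) :
    gen sq 2 * mono sq p ∈ Submodule.span ℂ (Set.range (mono sq)) := by
  obtain ⟨j, k, l⟩ := p
  induction j with
  | zero =>
      have : gen sq 2 * mono sq (0, k, l) = mono sq (0, k + 1, l) := by
        simp only [mono, pow_zero, one_mul]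
        rw [← mul_assoc, ← pow_succ']
      rw [this]; exact mono_mem sq _
  | succ n ih =>
      have : gen sq 2 * mono sq (n + 1, k, l)
          = q⁻¹ • (gen sq 1 * (gen sq 2 * mono sq (n, k, l))) := by
        simp only [mono, pow_succ']
        rw [show gen sq 2 * (gen sq 1 * gen sq 1 ^ n * gen sq 2 ^ k * gen sq 0 ^ l)
            = (gen sq 2 * gen sq 1) * (gen sq 1 ^ n * (gen sq 2 ^ k * gen sq 0 ^ l)) by
          simp only [mul_assoc], quot_rel3 hq hsq, smul_mul_assoc]
        simp only [mul_assoc]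
      rw [this]
      exact Submodule.smul_mem _ _ (mul_span_helper _ (gen1_mul_mono sq) _ ih)

theorem gen0_mul_mono (hq : q ≠ 0) (hsq : sq ^ 2 = q) (p : ℕ × ℕ × ℕ) :
    gen sq 0 * mono sq p ∈ Submodule.span ℂ (Set.range (mono sq)) := by
  obtain ⟨j, k, l⟩ := p
  induction j with
  | zero =>
      induction k with
      | zero =>
          have : gen sq 0 * mono sq (0, 0, l) = mono sq (0, 0, l + 1) := by
            simp only [mono, pow_zero, one_mul]
            rw [← pow_succ']
          rw [this]; exact mono_mem sq _
      | succ m ih =>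
          have : gen sq 0 * mono sq (0, m + 1, l)
              = q⁻¹ • (gen sq 2 * (gen sq 0 * mono sq (0, m, l)))
                + sq⁻¹ • (gen sq 1 * mono sq (0, m, l)) := by
            simp only [mono, pow_zero, one_mul, pow_succ']
            rw [show gen sq 0 * (gen sq 2 * gen sq 2 ^ m * gen sq 0 ^ l)
                = (gen sq 0 * gen sq 2) * (gen sq 2 ^ m * gen sq 0 ^ l) by
              simp only [mul_assoc], quot_rel1 hq hsq, add_mul, smul_mul_assoc, smul_mul_assoc]
            simp only [mul_assoc]
          rw [this]
          refine Submodule.add_mem _ ?_ ?_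
          · exact Submodule.smul_mem _ _
              (mul_span_helper _ (gen2_mul_mono hq hsq) _ ih)
          · exact Submodule.smul_mem _ _ (gen1_mul_mono sq _)
  | succ n ih =>
      have : gen sq 0 * mono sq (n + 1, k, l)
          = q • (gen sq 1 * (gen sq 0 * mono sq (n, k, l)))
            - sq • (gen sq 2 * mono sq (n, k, l)) := by
        simp only [mono, pow_succ']
        rw [show gen sq 0 * (gen sq 1 * gen sq 1 ^ n * gen sq 2 ^ k * gen sq 0 ^ l)
            = (gen sq 0 * gen sq 1) * (gen sq 1 ^ n * (gen sq 2 ^ k * gen sq 0 ^ l)) by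
          simp only [mul_assoc], quot_rel2 hq hsq, sub_mul, smul_mul_assoc, smul_mul_assoc]
        simp only [mul_assoc]
      rw [this]
      refine Submodule.sub_mem _ ?_ ?_
      · exact Submodule.smul_mem _ _
          (mul_span_helper _ (gen1_mul_mono sq) _ ih)
      · exact Submodule.smul_mem _ _ (gen2_mul_mono hq hsq _)

theorem span_mono_top (hq : q ≠ 0) (hsq : sq ^ 2 = q) :
    Submodule.span ℂ (Set.range (mono sq)) = ⊤ := by
  rw [Submodule.eq_top_iff']
  intro x
  have hadj : x ∈ Algebra.adjoin ℂ (Set.range (gen sq)) := by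
    have : Set.range (gen sq)
        = (RingQuot.mkAlgHom ℂ (IsoRel sq)) '' (Set.range (FreeAlgebra.ι ℂ)) := by
      rw [← Set.range_comp]; rfl
    rw [this, ← AlgHom.map_adjoin, FreeAlgebra.adjoin_range_ι]
    obtain ⟨y, rfl⟩ := RingQuot.mkAlgHom_surjective ℂ (IsoRel sq) x
    exact Subalgebra.mem_map.mpr ⟨y, Algebra.mem_top, rfl⟩
  have main : ∀ y, y ∈ Algebra.adjoin ℂ (Set.range (gen sq)) →
      ∀ s ∈ Submodule.span ℂ (Set.range (mono sq)),
        y * s ∈ Submodule.span ℂ (Set.range (mono sq)) := by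
    intro y hy
    induction hy using Algebra.adjoin_induction with
    | mem z hz =>
        obtain ⟨i, rfl⟩ := hz
        fin_cases i
        · exact mul_span_helper _ (gen0_mul_mono hq hsq)
        · exact mul_span_helper _ (gen1_mul_mono sq)
        · exact mul_span_helper _ (gen2_mul_mono hq hsq)
    | algebraMap r =>
        intro s hs
        rw [← Algebra.smul_def]
        exact Submodule.smul_mem _ _ hs
    | add y z _ _ hy hz =>
        intro s hs
        rw [add_mul]
        exact Submodule.add_mem _ (hy s hs) (hz s hs)
    | mul y z _ _ hy hz =>
        intro s hs
        rw [mul_assoc]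
        exact hy _ (hz s hs)
  have h1 : (1 : UqIso2 sq) ∈ Submodule.span ℂ (Set.range (mono sq)) := by
    have : (1 : UqIso2 sq) = mono sq (0, 0, 0) := by simp [mono]
    rw [this]; exact mono_mem sq _
  have := main x hadj 1 h1
  rwa [mul_one] at this

end Span

end

end Stmt5Aux

theorem stmt5 (q sq : ℂ) (hq : q ≠ 0) (hsq : sq ^ 2 = q) :
    ∃ B : Module.Basis (ℕ × ℕ × ℕ) ℂ (UqIso2 sq),
      ∀ j k l : ℕ, B (j, k, l) = (gen sq 1) ^ j * (gen sq 2) ^ k * (gen sq 0) ^ l := by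
  classical
  have hli : LinearIndependent ℂ (Stmt5Aux.mono sq) := by
    let φ : UqIso2 sq →ₗ[ℂ] Stmt5Aux.V :=
      (LinearMap.applyₗ (Finsupp.single ((0 : ℕ), (0 : ℕ), (0 : ℕ)) (1 : ℂ))).comp
        (Stmt5Aux.rep q sq hq hsq).toLinearMap
    apply LinearIndependent.of_comp φ
    have hcomp : ⇑φ ∘ Stmt5Aux.mono sq = fun x : ℕ × ℕ × ℕ => Finsupp.single x (1 : ℂ) := by
      funext x
      obtain ⟨j, k, l⟩ := x
      simpa [φ, Stmt5Aux.mono] using Stmt5Aux.rep_apply q sq hq hsq j k l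
    rw [hcomp, ← Finsupp.coe_basisSingleOne]
    exact Finsupp.basisSingleOne.linearIndependent
  refine ⟨Module.Basis.mk hli (le_of_eq (Stmt5Aux.span_mono_top hq hsq).symm), ?_⟩
  intro j k l
  rw [Module.Basis.mk_apply]
  rfl
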